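/- Let E be a real inner product space and f : E → ℝ be differentiable with L_f-Lipschitz gradient, i.e. ‖∇f(x) − ∇f(y)‖ ≤ L_f ‖x − y‖ for all x, y. Let η > 0 satisfy η ≤ 1/L_f, let θ ∈ E, δ ∈ E, and set θ' = θ − η(∇f(θ) + δ). Then f(θ') ≤ f(θ) − (η/2)‖∇f(θ)‖² + (η/2)‖δ‖². -/

import Mathlib

open scoped RealInnerProductSpace
open intervalIntegral in
lemma smooth_ineq {E : Type*} [NormedAddCommGroup E] [InnerProductSpace ℝ E] [CompleteSpace E]
    (f : E → ℝ) (Lf : ℝ) (hLf : 0 ≤ Lf)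
    (hdiff : Differentiable ℝ f)
    (hlip : ∀ x y : E, ‖gradient f x - gradient f y‖ ≤ Lf * ‖x - y‖)
    (x y : E) :
    f y ≤ f x + ⟪gradient f x, y - x⟫ + Lf / 2 * ‖y - x‖ ^ 2 := by
  set v := y - x with hv
  set g : ℝ → ℝ := fun t => f (x + t • v) with hg
  have hlipg : LipschitzWith Lf.toNNReal (gradient f) := by
    apply LipschitzWith.of_dist_le_mul
    intro a b
    simpa [dist_eq_norm, Real.coe_toNNReal _ hLf] using hlip a b
  have hderiv : ∀ t : ℝ, HasDerivAt g (⟪gradient f (x + t • v), v⟫) t := by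
    intro t
    have h1 : HasDerivAt (fun t : ℝ => x + t • v) v t :=
      by simpa using ((hasDerivAt_id t).smul_const v).const_add x
    have h2 : HasFDerivAt f (InnerProductSpace.toDual ℝ E (gradient f (x + t • v)))
        (x + t • v) := (hdiff _).hasGradientAt.hasFDerivAt
    simpa [hg, Function.comp_def] using h2.comp_hasDerivAt t h1
  have hcont : Continuous fun t : ℝ => ⟪gradient f (x + t • v), v⟫ := by
    apply Continuous.inner _ continuous_const
    exact hlipg.continuous.comp (by continuity)
  have hint : f (x + (1:ℝ) • v) - f (x + (0:ℝ) • v)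
      = ∫ t in (0:ℝ)..1, ⟪gradient f (x + t • v), v⟫ := by
    rw [← intervalIntegral.integral_eq_sub_of_hasDerivAt (fun t _ => hderiv t)
      (hcont.intervalIntegrable 0 1)]
  have hbound : ∀ t ∈ Set.Icc (0:ℝ) 1,
      ⟪gradient f (x + t • v), v⟫ ≤ ⟪gradient f x, v⟫ + Lf * ‖v‖ ^ 2 * t := by
    intro t ht
    have h1 : ⟪gradient f (x + t • v) - gradient f x, v⟫ ≤ Lf * ‖v‖ ^ 2 * t := by
      calc ⟪gradient f (x + t • v) - gradient f x, v⟫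
          ≤ ‖gradient f (x + t • v) - gradient f x‖ * ‖v‖ := real_inner_le_norm _ _
        _ ≤ (Lf * ‖(x + t • v) - x‖) * ‖v‖ :=
            mul_le_mul_of_nonneg_right (hlip _ _) (norm_nonneg _)
        _ = Lf * ‖v‖ ^ 2 * t := by
            rw [add_sub_cancel_left, norm_smul, Real.norm_eq_abs, abs_of_nonneg ht.1]; ring
    have := inner_sub_left (𝕜 := ℝ) (gradient f (x + t • v)) (gradient f x) v
    linarith [this ▸ h1]
  have hIle : (∫ t in (0:ℝ)..1, ⟪gradient f (x + t • v), v⟫)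
      ≤ ∫ t in (0:ℝ)..1, (⟪gradient f x, v⟫ + Lf * ‖v‖ ^ 2 * t) := by
    apply intervalIntegral.integral_mono_on zero_le_one
      (hcont.intervalIntegrable 0 1)
      (by apply Continuous.intervalIntegrable; continuity)
    exact hbound
  have hIval : (∫ t in (0:ℝ)..1, (⟪gradient f x, v⟫ + Lf * ‖v‖ ^ 2 * t))
      = ⟪gradient f x, v⟫ + Lf / 2 * ‖v‖ ^ 2 := by
    rw [intervalIntegral.integral_add (by apply Continuous.intervalIntegrable; continuity)
      (by apply Continuous.intervalIntegrable; continuity),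
      intervalIntegral.integral_const, intervalIntegral.integral_const_mul, integral_id]
    simp
    ring
  have h10 : x + (1:ℝ) • v = y := by simp [hv]
  have h00 : x + (0:ℝ) • v = x := by simp
  rw [h10, h00] at hint
  linarith [hint, hIle, hIval ▸ hIle]

/-- One-step descent estimate for gradient descent with a biased (stale) gradient. -/
theorem stmt_0 {E : Type*} [NormedAddCommGroup E] [InnerProductSpace ℝ E] [CompleteSpace E]
    (f : E → ℝ) (Lf : ℝ)
    (hdiff : Differentiable ℝ f)
    (hlip : ∀ x y : E, ‖gradient f x - gradient f y‖ ≤ Lf * ‖x - y‖)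
    (η : ℝ) (hη : 0 < η) (hηL : η ≤ 1 / Lf)
    (θ δ θ' : E) (hθ' : θ' = θ - η • (gradient f θ + δ)) :
    f θ' ≤ f θ - η / 2 * ‖gradient f θ‖ ^ 2 + η / 2 * ‖δ‖ ^ 2 := by
  have hLf : 0 < Lf := one_div_pos.mp (lt_of_lt_of_le hη hηL)
  have hηLf : η * Lf ≤ 1 := by
    rw [le_div_iff₀ hLf] at hηL; exact hηL
  set g := gradient f θ with hgdef
  have key := smooth_ineq f Lf hLf.le hdiff hlip θ θ'
  have hdiffv : θ' - θ = -(η • (g + δ)) := by rw [hθ']; abel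
  have hinner : ⟪g, θ' - θ⟫ = -(η * ⟪g, g + δ⟫) := by
    rw [hdiffv, inner_neg_right, real_inner_smul_right]
  have hnorm : ‖θ' - θ‖ ^ 2 = η ^ 2 * ‖g + δ‖ ^ 2 := by
    rw [hdiffv, norm_neg, norm_smul, Real.norm_eq_abs, abs_of_pos hη]; ring
  rw [hinner, hnorm] at key
  have hexp : ‖g + δ‖ ^ 2 = ‖g‖ ^ 2 + 2 * ⟪g, δ⟫ + ‖δ‖ ^ 2 := norm_add_sq_real g δ
  have hip : ⟪g, g + δ⟫ = ‖g‖ ^ 2 + ⟪g, δ⟫ := by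
    rw [inner_add_right, real_inner_self_eq_norm_sq]
  have hLq : Lf / 2 * (η ^ 2 * ‖g + δ‖ ^ 2) ≤ η / 2 * ‖g + δ‖ ^ 2 := by
    have h1 : 0 ≤ ‖g + δ‖ ^ 2 := sq_nonneg _
    nlinarith
  nlinarith [key, hLq, hexp, hip]
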